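/- Let R be a signed graded ring with subpositive semiring R_#. If A₁, A₂ ∈ R_#⟦T⟧ (i.e. all coefficients are subpositive or zero), then the top-degree subseries satisfies (A₁ + A₂)^td = (A₁^td + A₂^td)^td, and this series has all coefficients positive or zero. -/

import Mathlib

open DirectSum

variable {R : Type*} [CommRing R]

open scoped Classical in
/-- The top-degree homogeneous part of an element of a `ℤ`-graded ring, with `0^td = 0`. -/
noncomputable def td (𝒜 : ℤ → AddSubgroup R) [GradedRing 𝒜] (a : R) : R :=
  if h : a = 0 then 0
  else (decompose 𝒜 a ((DFinsupp.support (decompose 𝒜 a)).max'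
      (Finset.nonempty_of_ne_empty (by
        intro h0
        apply h
        have h1 : decompose 𝒜 a = 0 := DFinsupp.support_eq_empty.mp h0
        have := congrArg (decompose 𝒜).symm h1
        simpa using this))) : R)

/-- A signing on a `ℤ`-graded ring. -/
structure Signing (𝒜 : ℤ → AddSubgroup R) [GradedRing 𝒜] where
  P : ℤ → Set R
  subset : ∀ d, P d ⊆ (𝒜 d : Set R)
  add_mem : ∀ {d : ℤ} {a b : R}, a ∈ P d → b ∈ P d → a + b ∈ P d
  one_mem : (1 : R) ∈ P 0
  zero_not_mem : ∀ d, (0 : R) ∉ P d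
  mul_mem : ∀ {d e : ℤ} {a b : R}, a ∈ P d → b ∈ P e → a * b ∈ P (d + e)

/-- `a` is positive: a nonzero finite sum of elements of the `P d`'s. -/
def Signing.Positive {𝒜 : ℤ → AddSubgroup R} [GradedRing 𝒜] (S : Signing 𝒜) (a : R) : Prop :=
  a ≠ 0 ∧ a ∈ AddSubmonoid.closure (⋃ d, S.P d)

/-- `a` is subpositive: its top-degree part is positive. -/
noncomputable def Signing.Subpositive {𝒜 : ℤ → AddSubgroup R} [GradedRing 𝒜]
    (S : Signing 𝒜) (a : R) : Prop :=
  S.Positive (td 𝒜 a)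

variable (𝒜 : ℤ → AddSubgroup R) [GradedRing 𝒜]

lemma td_eq_of {a : R} {d : ℤ} (hd : (decompose 𝒜 a d : R) ≠ 0)
    (hmax : ∀ e, (decompose 𝒜 a e : R) ≠ 0 → e ≤ d) :
    td 𝒜 a = (decompose 𝒜 a d : R) := by
  classical
  have ha : a ≠ 0 := by
    rintro rfl
    simp at hd
  have key : ∀ (h : (DFinsupp.support (decompose 𝒜 a)).Nonempty),
      (DFinsupp.support (decompose 𝒜 a)).max' h = d := by
    intro h
    apply le_antisymm
    · apply Finset.max'_le
      intro e he
      rw [DFinsupp.mem_support_iff] at he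
      exact hmax e (fun h' => he (Subtype.ext h'))
    · apply Finset.le_max'
      rw [DFinsupp.mem_support_iff]
      exact fun h' => hd (by rw [h']; rfl)
  rw [td, dif_neg ha, key]

@[simp] lemma td_zero : td 𝒜 (0 : R) = 0 := by rw [td, dif_pos rfl]

/-- td of a nonzero homogeneous element is itself. -/
lemma td_of_mem {x : R} {d : ℤ} (hx : x ∈ 𝒜 d) (hx0 : x ≠ 0) : td 𝒜 x = x := by
  have h1 : (decompose 𝒜 x d : R) = x := decompose_of_mem_same 𝒜 hx
  rw [td_eq_of 𝒜 (h1 ▸ hx0) ?_, h1]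
  intro e he
  by_contra hle
  exact he (decompose_of_mem_ne 𝒜 hx (fun h => hle (h ▸ le_refl d)))

/-- spec of td for nonzero a. -/
lemma td_spec {a : R} (ha : a ≠ 0) : ∃ d, (decompose 𝒜 a d : R) ≠ 0 ∧
    (∀ e, (decompose 𝒜 a e : R) ≠ 0 → e ≤ d) ∧ td 𝒜 a = (decompose 𝒜 a d : R) := by
  classical
  have hne : (DFinsupp.support (decompose 𝒜 a)).Nonempty := by
    refine Finset.nonempty_of_ne_empty ?_
    intro h0
    apply ha
    have h1 : decompose 𝒜 a = 0 := DFinsupp.support_eq_empty.mp h0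
    have := congrArg (decompose 𝒜).symm h1
    simpa using this
  set d := (DFinsupp.support (decompose 𝒜 a)).max' hne with hd
  have h1 : (decompose 𝒜 a d : R) ≠ 0 := by
    have := (DFinsupp.mem_support_iff).mp ((DFinsupp.support (decompose 𝒜 a)).max'_mem hne)
    exact fun h => this (Subtype.ext h)
  have h2 : ∀ e, (decompose 𝒜 a e : R) ≠ 0 → e ≤ d := by
    intro e he
    apply Finset.le_max'
    rw [DFinsupp.mem_support_iff]
    exact fun h => he (by rw [h]; rfl)
  exact ⟨d, h1, h2, td_eq_of 𝒜 h1 h2⟩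

lemma closure_decompose (S : Signing 𝒜) {x : R}
    (hx : x ∈ AddSubmonoid.closure (⋃ d, S.P d)) (d : ℤ) :
    (decompose 𝒜 x d : R) = 0 ∨ (decompose 𝒜 x d : R) ∈ S.P d := by
  induction hx using AddSubmonoid.closure_induction with
  | mem y hy =>
    obtain ⟨e, he⟩ := Set.mem_iUnion.mp hy
    by_cases h : d = e
    · subst h
      right
      rw [decompose_of_mem_same 𝒜 (S.subset d he)]
      exact he
    · left
      exact decompose_of_mem_ne 𝒜 (S.subset e he) (Ne.symm h)
  | zero => left; simp
  | add a b _ _ iha ihb =>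
    rw [decompose_add, DirectSum.add_apply, AddSubgroup.coe_add]
    rcases iha with h | h <;> rcases ihb with h' | h'
    · left; rw [h, h', add_zero]
    · right; rwa [h, zero_add]
    · right; rwa [h', add_zero]
    · right; exact S.add_mem h h'

lemma pos_mem_P (S : Signing 𝒜) {x : R} {d : ℤ} (hx : x ∈ 𝒜 d) (hpos : S.Positive x) :
    x ∈ S.P d := by
  have := closure_decompose 𝒜 S hpos.2 d
  rw [decompose_of_mem_same 𝒜 hx] at this
  exact this.resolve_left hpos.1

/-- td(a+b) = td b when the top degree of b exceeds all degrees of a. -/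
lemma td_add_of_lt {a b : R} {da db : ℤ}
    (hamax : ∀ e, (decompose 𝒜 a e : R) ≠ 0 → e ≤ da)
    (hb : (decompose 𝒜 b db : R) ≠ 0)
    (hbmax : ∀ e, (decompose 𝒜 b e : R) ≠ 0 → e ≤ db)
    (hlt : da < db) : td 𝒜 (a + b) = td 𝒜 b := by
  have ha0 : (decompose 𝒜 a db : R) = 0 := by
    by_contra h
    exact absurd (hamax db h) (not_le.mpr hlt)
  have hab : (decompose 𝒜 (a + b) db : R) = (decompose 𝒜 b db : R) := by
    rw [decompose_add, DirectSum.add_apply, AddSubgroup.coe_add, ha0, zero_add]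
  rw [td_eq_of 𝒜 (a := a + b) (d := db) (hab ▸ hb) ?_, hab, td_eq_of 𝒜 hb hbmax]
  intro e he
  rw [decompose_add, DirectSum.add_apply, AddSubgroup.coe_add] at he
  by_cases h : (decompose 𝒜 a e : R) = 0
  · rw [h, zero_add] at he
    exact hbmax e he
  · exact le_trans (hamax e h) hlt.le

/-- The core coefficientwise statement. -/
lemma td_key (S : Signing 𝒜) (a b : R)
    (ha : S.Subpositive a ∨ a = 0) (hb : S.Subpositive b ∨ b = 0) :
    td 𝒜 (a + b) = td 𝒜 (td 𝒜 a + td 𝒜 b) ∧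
      (S.Positive (td 𝒜 (a + b)) ∨ td 𝒜 (a + b) = 0) := by
  -- helper for the "one side zero" case
  have idem : ∀ {c : R}, S.Subpositive c → td 𝒜 (td 𝒜 c) = td 𝒜 c := by
    intro c hc
    have hc0 : c ≠ 0 := by
      rintro rfl
      exact hc.1 (td_zero 𝒜)
    obtain ⟨d, h1, _, h3⟩ := td_spec 𝒜 hc0
    rw [h3]
    exact td_of_mem 𝒜 (SetLike.coe_mem _) h1
  rcases ha with ha | rfl
  · rcases hb with hb | rfl
    · -- both subpositive
      have ha0 : a ≠ 0 := by rintro rfl; exact ha.1 (td_zero 𝒜)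
      have hb0 : b ≠ 0 := by rintro rfl; exact hb.1 (td_zero 𝒜)
      obtain ⟨da, ha1, ha2, ha3⟩ := td_spec 𝒜 ha0
      obtain ⟨db, hb1, hb2, hb3⟩ := td_spec 𝒜 hb0
      have hxa : td 𝒜 a ∈ 𝒜 da := ha3 ▸ SetLike.coe_mem _
      have hxb : td 𝒜 b ∈ 𝒜 db := hb3 ▸ SetLike.coe_mem _
      have hxamax : ∀ e, (decompose 𝒜 (td 𝒜 a) e : R) ≠ 0 → e ≤ da := by
        intro e he
        by_contra h
        exact he (decompose_of_mem_ne 𝒜 hxa (fun h' => h (h' ▸ le_refl _)))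
      have hxbmax : ∀ e, (decompose 𝒜 (td 𝒜 b) e : R) ≠ 0 → e ≤ db := by
        intro e he
        by_contra h
        exact he (decompose_of_mem_ne 𝒜 hxb (fun h' => h (h' ▸ le_refl _)))
      have hxbd : (decompose 𝒜 (td 𝒜 b) db : R) ≠ 0 := by
        rw [decompose_of_mem_same 𝒜 hxb]; exact hb.1
      have hxad : (decompose 𝒜 (td 𝒜 a) da : R) ≠ 0 := by
        rw [decompose_of_mem_same 𝒜 hxa]; exact ha.1
      rcases lt_trichotomy da db with h | h | h
      · constructor
        · rw [td_add_of_lt 𝒜 ha2 hb1 hb2 h,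
            td_add_of_lt 𝒜 hxamax hxbd hxbmax h, idem hb]
        · rw [td_add_of_lt 𝒜 ha2 hb1 hb2 h]
          exact Or.inl hb
      · -- equal degrees
        subst h
        have hpa : td 𝒜 a ∈ S.P da := pos_mem_P 𝒜 S hxa ha
        have hpb : td 𝒜 b ∈ S.P da := pos_mem_P 𝒜 S hxb hb
        have hsum : td 𝒜 a + td 𝒜 b ∈ S.P da := S.add_mem hpa hpb
        have hsum0 : td 𝒜 a + td 𝒜 b ≠ 0 := fun h => S.zero_not_mem da (h ▸ hsum)
        have hsumA : td 𝒜 a + td 𝒜 b ∈ 𝒜 da := S.subset da hsum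
        have habd : (decompose 𝒜 (a + b) da : R) = td 𝒜 a + td 𝒜 b := by
          rw [decompose_add, DirectSum.add_apply, AddSubgroup.coe_add, ha3, hb3]
        have htd1 : td 𝒜 (a + b) = td 𝒜 a + td 𝒜 b := by
          rw [td_eq_of 𝒜 (a := a + b) (d := da) (habd ▸ hsum0) ?_, habd]
          intro e he
          rw [decompose_add, DirectSum.add_apply, AddSubgroup.coe_add] at he
          by_cases h : (decompose 𝒜 a e : R) = 0
          · rw [h, zero_add] at he
            exact hb2 e he
          · exact ha2 e h
        constructor
        · rw [htd1, td_of_mem 𝒜 hsumA hsum0]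
        · left
          rw [htd1]
          exact ⟨hsum0, AddSubmonoid.subset_closure (Set.mem_iUnion.mpr ⟨da, hsum⟩)⟩
      · constructor
        · rw [add_comm a b, add_comm (td 𝒜 a) (td 𝒜 b),
            td_add_of_lt 𝒜 hb2 ha1 ha2 h,
            td_add_of_lt 𝒜 hxbmax hxad hxamax h, idem ha]
        · rw [add_comm a b, td_add_of_lt 𝒜 hb2 ha1 ha2 h]
          exact Or.inl ha
    · -- b = 0
      rw [add_zero, td_zero, add_zero, idem ha]
      exact ⟨rfl, Or.inl ha⟩
  · -- a = 0
    rcases hb with hb | rfl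
    · refine ⟨?_, ?_⟩
      · rw [zero_add, td_zero, zero_add, idem hb]
      · rw [zero_add]; exact Or.inl hb
    · simp

/-- The coefficientwise top-degree subseries of a power series. -/
noncomputable def tdSeries (𝒜 : ℤ → AddSubgroup R) [GradedRing 𝒜]
    (A : PowerSeries R) : PowerSeries R :=
  PowerSeries.mk fun n => td 𝒜 (PowerSeries.coeff n A)

/-- Lemma 3.3(2): if all coefficients of `A₁, A₂` are subpositive or zero, then
`(A₁ + A₂)^td = (A₁^td + A₂^td)^td`, and this series has all coefficients positive
or zero. -/
theorem stmt7 (𝒜 : ℤ → AddSubgroup R) [GradedRing 𝒜] (S : Signing 𝒜)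
    (A₁ A₂ : PowerSeries R)
    (h1 : ∀ n, S.Subpositive (PowerSeries.coeff n A₁) ∨ PowerSeries.coeff n A₁ = 0)
    (h2 : ∀ n, S.Subpositive (PowerSeries.coeff n A₂) ∨ PowerSeries.coeff n A₂ = 0) :
    tdSeries 𝒜 (A₁ + A₂) = tdSeries 𝒜 (tdSeries 𝒜 A₁ + tdSeries 𝒜 A₂) ∧
    (∀ n, S.Positive (PowerSeries.coeff n (tdSeries 𝒜 (A₁ + A₂))) ∨
      PowerSeries.coeff n (tdSeries 𝒜 (A₁ + A₂)) = 0) := by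
  constructor
  · apply PowerSeries.ext
    intro n
    simp only [tdSeries, PowerSeries.coeff_mk, map_add]
    exact (td_key 𝒜 S _ _ (h1 n) (h2 n)).1
  · intro n
    simp only [tdSeries, PowerSeries.coeff_mk, map_add]
    exact (td_key 𝒜 S _ _ (h1 n) (h2 n)).2
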